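/- arXiv:2605.29880 — 6 statements merged into one kernel-verified Lean document; each statement's English description precedes it below -/
import Mathlib

section
/- Let (S,⊔,0) be a semilattice frame and define · : S×S → 𝒫(S) by x·y := {x ⊔ y} and N := {0}. Then (S,·,N) is a Routley–Meyer frame (it satisfies reflexivity, transitivity, upset and down-down-up), and it moreover satisfies, for all x,y,z ∈ S: (h) x·y ⊆ x·(x·y); (p) (x·y)·z ⊆ x·(y·z); (s) (x·y)·z ⊆ y·(x·z); x ∈ x·x; x·y ⊆ (x·y)·y; x ∈ x·N; x·y ⊆ y·x; and x·x ⊆ N·x. In particular, every semilattice frame is a Routley–Meyer set frame. -/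
/-- The preorder `x ≤ y` defined by `∃ n ∈ N, y ∈ n·x`. -/
def RMle {K : Type*} (op : K → K → Set K) (N : Set K) (x y : K) : Prop :=
  ∃ n ∈ N, y ∈ op n x

/-- The Routley–Meyer frame conditions: reflexivity, transitivity, upset, down-down-up. -/
def IsRM {K : Type*} (op : K → K → Set K) (N : Set K) : Prop :=
  (∀ x, RMle op N x x) ∧
  (∀ x y z, RMle op N x y → RMle op N y z → RMle op N x z) ∧
  (∀ n m, n ∈ N → RMle op N n m → m ∈ N) ∧
  (∀ x y z x' y' z', z ∈ op x y → RMle op N x' x → RMle op N y' y → RMle op N z z' →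
    z' ∈ op x' y')

/-- `x·Y = ⋃ y ∈ Y, x·y`. -/
def setL {K : Type*} (op : K → K → Set K) (x : K) (Y : Set K) : Set K :=
  ⋃ y ∈ Y, op x y

/-- `X·y = ⋃ x ∈ X, x·y`. -/
def setR {K : Type*} (op : K → K → Set K) (X : Set K) (y : K) : Set K :=
  ⋃ x ∈ X, op x y

/-- A Routley–Meyer set frame: a Routley–Meyer frame satisfying (h), (p), (s),
`x ∈ x·x`, `x·y ⊆ (x·y)·y`, `x ∈ x·N`, `x·y ⊆ y·x` and `x·x ⊆ N·x`. -/
def IsSetFrame {K : Type*} (op : K → K → Set K) (N : Set K) : Prop :=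
  IsRM op N ∧
  (∀ x y : K, op x y ⊆ setL op x (op x y)) ∧
  (∀ x y z : K, setR op (op x y) z ⊆ setL op x (op y z)) ∧
  (∀ x y z : K, setR op (op x y) z ⊆ setL op y (op x z)) ∧
  (∀ x : K, x ∈ op x x) ∧
  (∀ x y : K, op x y ⊆ setR op (op x y) y) ∧
  (∀ x : K, x ∈ setL op x N) ∧
  (∀ x y : K, op x y ⊆ op y x) ∧
  (∀ x : K, op x x ⊆ setR op N x)

/-- The operation `x·y := {x ⊔ y}` induced by a semilattice frame. -/
def semOp {S : Type*} (sup : S → S → S) : S → S → Set S := fun x y => {sup x y}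

/-- every semilattice frame, viewed as `(S, ·, N)` with `x·y = {x ⊔ y}`
and `N = {0}`, is a Routley–Meyer frame satisfying (h), (p), (s), `x ∈ x·x`,
`x·y ⊆ (x·y)·y`, `x ∈ x·N`, `x·y ⊆ y·x` and `x·x ⊆ N·x`; in particular it is a
Routley–Meyer set frame. -/
theorem semilattice_isSetFrame {S : Type*} (sup : S → S → S) (z : S)
    (hcomm : ∀ x y, sup x y = sup y x)
    (hassoc : ∀ x y w, sup (sup x y) w = sup x (sup y w))
    (hidem : ∀ x, sup x x = x)
    (hident : ∀ x, sup z x = x) :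
    IsSetFrame (semOp sup) {z} := by
  have hle : ∀ x y : S, RMle (semOp sup) {z} x y ↔ y = x := by
    intro x y
    constructor
    · rintro ⟨n, rfl, hy⟩
      simpa [semOp, hident] using hy
    · rintro rfl
      exact ⟨z, rfl, by simp [semOp, hident]⟩
  refine ⟨⟨fun x => (hle x x).2 rfl, ?_, ?_, ?_⟩, ?_, ?_, ?_, ?_, ?_, ?_, ?_, ?_⟩
  · intro x y w h1 h2
    rw [hle] at *
    rw [h2, h1]
  · intro n m hn h
    rw [hle] at h
    rw [h]; exact hn
  · intro x y w x' y' z' hw h1 h2 h3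
    rw [hle] at h1 h2 h3
    simp only [semOp, Set.mem_singleton_iff] at *
    subst h1; subst h2; subst h3; exact hw
  · intro x y w hw
    simp only [semOp, Set.mem_singleton_iff] at hw
    refine Set.mem_biUnion (Set.mem_singleton _) ?_
    simp [semOp, hw, ← hassoc, hidem]
  · intro x y w v hv
    simp only [setR, setL, semOp, Set.mem_iUnion, Set.mem_singleton_iff] at *
    obtain ⟨a, rfl, rfl⟩ := hv
    exact ⟨sup y w, rfl, hassoc x y w⟩
  · intro x y w v hv
    simp only [setR, setL, semOp, Set.mem_iUnion, Set.mem_singleton_iff] at *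
    obtain ⟨a, rfl, rfl⟩ := hv
    refine ⟨sup x w, rfl, ?_⟩
    rw [hcomm x y, hassoc]
  · intro x; simp [semOp, hidem]
  · intro x y w hw
    simp only [setR, semOp, Set.mem_iUnion, Set.mem_singleton_iff] at *
    exact ⟨sup x y, rfl, by rw [hw, hassoc, hidem]⟩
  · intro x
    simp only [setL, semOp, Set.mem_iUnion, Set.mem_singleton_iff]
    exact ⟨z, rfl, by rw [hcomm, hident]⟩
  · intro x y w hw
    simp only [semOp, Set.mem_singleton_iff] at *
    rw [hw, hcomm]
  · intro x w hw
    simp only [setR, semOp, Set.mem_iUnion, Set.mem_singleton_iff] at *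
    exact ⟨z, rfl, by rw [hw, hident, hidem]⟩
end

section
/- For any finite set W of Wang tiles, the following are equivalent: (1) W tiles ℤ²; (2) W tiles ℕ²; (3) for all k ∈ ℕ, W tiles the k-quadrant ℚ(k); (4) for all k ∈ ℕ, W tiles the k-octant 𝕆(k). -/
/-- A Wang tile: a quadruple `(t_W, t_E, t_N, t_S)` of natural numbers. -/
abbrev Tile : Type := ℕ × ℕ × ℕ × ℕ

/-- West colour. -/
def tW (t : Tile) : ℕ := t.1
/-- East colour. -/
def tE (t : Tile) : ℕ := t.2.1
/-- North colour. -/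
def tN (t : Tile) : ℕ := t.2.2.1
/-- South colour. -/
def tS (t : Tile) : ℕ := t.2.2.2

/-- `W` tiles `D ⊆ ℤ²`: there is a map assigning to each point of `D` a tile of `W`
such that horizontally and vertically adjacent tiles within `D` match. -/
def Tiles (W : Finset Tile) (D : Set (ℤ × ℤ)) : Prop :=
  ∃ τ : ℤ × ℤ → Tile,
    (∀ p ∈ D, τ p ∈ W) ∧
    (∀ m n : ℤ, (m, n) ∈ D → (m + 1, n) ∈ D → tE (τ (m, n)) = tW (τ (m + 1, n))) ∧
    (∀ m n : ℤ, (m, n) ∈ D → (m, n + 1) ∈ D → tN (τ (m, n)) = tS (τ (m, n + 1)))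

/-- The `k`-quadrant `ℚ(k) = {(m,n) : 0 ≤ m,n ≤ k}`. -/
def Quadrant (k : ℕ) : Set (ℤ × ℤ) :=
  {p | 0 ≤ p.1 ∧ p.1 ≤ (k : ℤ) ∧ 0 ≤ p.2 ∧ p.2 ≤ (k : ℤ)}

/-- The `k`-octant `𝕆(k) = {(m,n) : 0 ≤ m ≤ n ≤ k}`. -/
def Octant (k : ℕ) : Set (ℤ × ℤ) :=
  {p | 0 ≤ p.1 ∧ p.1 ≤ p.2 ∧ p.2 ≤ (k : ℤ)}

open Filter in
lemma quadrant_to_plane (W : Finset Tile) (h : ∀ k : ℕ, Tiles W (Quadrant k)) :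
    Tiles W Set.univ := by
  choose τ hτW hτE hτN using fun k : ℕ => h (2 * k)
  -- σ k is a tiling of the square [-k,k]²
  set σ : ℕ → ℤ × ℤ → Tile := fun k p => τ k (p.1 + k, p.2 + k) with hσ
  have hmem : ∀ (k : ℕ) (p : ℤ × ℤ), p.1.natAbs ≤ k → p.2.natAbs ≤ k →
      (p.1 + k, p.2 + k) ∈ Quadrant (2 * k) := by
    intro k p h1 h2
    simp only [Quadrant, Set.mem_setOf_eq]
    refine ⟨?_, ?_, ?_, ?_⟩ <;> omega
  have hσW : ∀ (k : ℕ) (p : ℤ × ℤ), p.1.natAbs ≤ k → p.2.natAbs ≤ k → σ k p ∈ W :=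
    fun k p h1 h2 => hτW k _ (hmem k p h1 h2)
  set u : Ultrafilter ℕ := hyperfilter ℕ with hu
  have hge : ∀ N : ℕ, {k | N ≤ k} ∈ u := by
    intro N
    apply mem_hyperfilter_of_finite_compl
    have : {k : ℕ | N ≤ k}ᶜ = Set.Iio N := by ext x; simp
    rw [this]; exact Set.finite_Iio N
  -- for each p, pick the tile that σ k p equals for u-many k
  have key : ∀ p : ℤ × ℤ, ∃ t ∈ W, {k | σ k p = t} ∈ u := by
    intro p
    have hsub : {k | max p.1.natAbs p.2.natAbs ≤ k} ⊆ ⋃ t ∈ (W : Set Tile), {k | σ k p = t} := by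
      intro k hk
      have := hσW k p (le_trans (le_max_left _ _) hk) (le_trans (le_max_right _ _) hk)
      exact Set.mem_biUnion this rfl
    have hU : (⋃ t ∈ (W : Set Tile), {k | σ k p = t}) ∈ u :=
      mem_of_superset (hge _) hsub
    rcases (Ultrafilter.finite_biUnion_mem_iff W.finite_toSet).mp hU with ⟨t, ht, htu⟩
    exact ⟨t, ht, htu⟩
  choose g hgW hgu using key
  refine ⟨g, fun p _ => hgW p, ?_, ?_⟩
  · intro m n _ _
    have hA : {k | σ k (m, n) = g (m, n)} ∩ ({k | σ k (m + 1, n) = g (m + 1, n)} ∩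
        {k | max (max (m.natAbs) ((m+1).natAbs)) (n.natAbs) ≤ k}) ∈ u :=
      inter_mem (hgu _) (inter_mem (hgu _) (hge _))
    rcases Filter.nonempty_of_mem hA with ⟨k, h1, h2, h3⟩
    simp only [Set.mem_setOf_eq] at h1 h2 h3
    rw [← h1, ← h2]
    have e := hτE k (m + k) (n + k) (hmem k (m, n) (by omega) (by omega))
      (by have := hmem k (m + 1, n) (by omega) (by omega); simpa [add_right_comm] using this)
    simp only [hσ]
    convert e using 3 <;> ring
  · intro m n _ _
    have hA : {k | σ k (m, n) = g (m, n)} ∩ ({k | σ k (m, n + 1) = g (m, n + 1)} ∩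
        {k | max (m.natAbs) (max (n.natAbs) ((n+1).natAbs)) ≤ k}) ∈ u :=
      inter_mem (hgu _) (inter_mem (hgu _) (hge _))
    rcases Filter.nonempty_of_mem hA with ⟨k, h1, h2, h3⟩
    simp only [Set.mem_setOf_eq] at h1 h2 h3
    rw [← h1, ← h2]
    have e := hτN k (m + k) (n + k) (hmem k (m, n) (by omega) (by omega))
      (by have := hmem k (m, n + 1) (by omega) (by omega); simpa [add_right_comm] using this)
    simp only [hσ]
    convert e using 3 <;> ring
/-- for a finite tile set `W`, tiling the plane `ℤ²`, tiling the quadrant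
`ℕ²`, tiling all finite quadrants `ℚ(k)` and tiling all finite octants `𝕆(k)` are
equivalent. -/
theorem tiles_tfae (W : Finset Tile) :
    List.TFAE
      [Tiles W Set.univ,
       Tiles W {p : ℤ × ℤ | 0 ≤ p.1 ∧ 0 ≤ p.2},
       ∀ k : ℕ, Tiles W (Quadrant k),
       ∀ k : ℕ, Tiles W (Octant k)] := by
  tfae_have 1 → 2 := by
    rintro ⟨τ, h1, h2, h3⟩
    exact ⟨τ, fun p _ => h1 p trivial, fun m n _ _ => h2 m n trivial trivial,
      fun m n _ _ => h3 m n trivial trivial⟩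
  tfae_have 2 → 3 := by
    rintro ⟨τ, h1, h2, h3⟩ k
    have sub : Quadrant k ⊆ {p : ℤ × ℤ | 0 ≤ p.1 ∧ 0 ≤ p.2} := fun p hp => ⟨hp.1, hp.2.2.1⟩
    exact ⟨τ, fun p hp => h1 p (sub hp), fun m n ha hb => h2 m n (sub ha) (sub hb),
      fun m n ha hb => h3 m n (sub ha) (sub hb)⟩
  tfae_have 3 → 4 := by
    intro h k
    obtain ⟨τ, h1, h2, h3⟩ := h k
    have sub : Octant k ⊆ Quadrant k := by
      rintro ⟨a, b⟩ ⟨x, y, z⟩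
      exact ⟨x, by omega, by omega, z⟩
    exact ⟨τ, fun p hp => h1 p (sub hp), fun m n ha hb => h2 m n (sub ha) (sub hb),
      fun m n ha hb => h3 m n (sub ha) (sub hb)⟩
  tfae_have 4 → 3 := by
    intro h k
    obtain ⟨τ, h1, h2, h3⟩ := h (2 * k)
    have sub : ∀ p : ℤ × ℤ, p ∈ Quadrant k → (p.1, p.2 + k) ∈ Octant (2 * k) := by
      rintro ⟨a, b⟩ ⟨x, y, z, w⟩
      refine ⟨x, by push_cast; omega, by push_cast; omega⟩
    refine ⟨fun p => τ (p.1, p.2 + k), fun p hp => h1 _ (sub p hp), ?_, ?_⟩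
    · intro m n ha hb
      exact h2 m (n + k) (sub _ ha) (sub _ hb)
    · intro m n ha hb
      have hb' : (m, n + (k:ℤ) + 1) ∈ Octant (2 * k) := by
        have := sub _ hb; simpa [add_right_comm] using this
      have := h3 m (n + k) (sub _ ha) hb'
      simp only []
      convert this using 3
      ring
  tfae_have 3 → 1 := quadrant_to_plane W
  tfae_finish
end

section
/- Let K be a set and · : K×K → 𝒫(K) satisfy (h) x·y ⊆ x·(x·y) and (p) (x·y)·z ⊆ x·(y·z) for all x,y,z ∈ K. If there are elements g, a₁, b₁, …, aₙ, bₙ ∈ K such that a₁ ∈ g·b₁, a₂ ∈ a₁·b₂, a₃ ∈ a₂·b₃, …, aₙ ∈ aₙ₋₁·bₙ, then there are elements a₁', …, aₙ' ∈ K such that a₁' ∈ g·b₁, a₂' ∈ a₁'·b₂, …, aₙ' ∈ aₙ₋₁'·bₙ, and for all 1 ≤ i ≤ n, aᵢ ∈ g·aᵢ'. -/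
/-- the chain lemma (Lemma 7). Under (h) and (p), any chain
`a₁ ∈ g·b₁, a₂ ∈ a₁·b₂, …, aₙ ∈ aₙ₋₁·bₙ` can be replaced by a parallel chain
`a₁' ∈ g·b₁, …, aₙ' ∈ aₙ₋₁'·bₙ` with `aᵢ ∈ g·aᵢ'` for all `1 ≤ i ≤ n`. -/
theorem chain_lemma {K : Type*} (op : K → K → Set K)
    (hH : ∀ x y : K, op x y ⊆ setL op x (op x y))
    (hP : ∀ x y z : K, setR op (op x y) z ⊆ setL op x (op y z))
    (n : ℕ) (hn : 1 ≤ n) (g : K) (a b : ℕ → K)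
    (hbase : a 1 ∈ op g (b 1))
    (hchain : ∀ i, 1 ≤ i → i < n → a (i + 1) ∈ op (a i) (b (i + 1))) :
    ∃ a' : ℕ → K,
      a' 1 ∈ op g (b 1) ∧
      (∀ i, 1 ≤ i → i < n → a' (i + 1) ∈ op (a' i) (b (i + 1))) ∧
      (∀ i, 1 ≤ i → i ≤ n → a i ∈ op g (a' i)) := by
  have key : ∀ m : ℕ, 1 ≤ m → m ≤ n → ∃ a' : ℕ → K,
      a' 1 ∈ op g (b 1) ∧
      (∀ i, 1 ≤ i → i < m → a' (i + 1) ∈ op (a' i) (b (i + 1))) ∧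
      (∀ i, 1 ≤ i → i ≤ m → a i ∈ op g (a' i)) := by
    intro m
    induction m with
    | zero => intro h; omega
    | succ m ih =>
      intro h1 hmn
      rcases Nat.eq_zero_or_pos m with hm0 | hm1
      · subst hm0
        have h := hH g (b 1) hbase
        simp only [setL, Set.mem_iUnion] at h
        obtain ⟨y, hy, hay⟩ := h
        refine ⟨fun _ => y, hy, ?_, ?_⟩
        · intro i hi1 hi; omega
        · intro i hi1 hi
          have : i = 1 := by omega
          subst this; exact hay
      · obtain ⟨a', h1', h2', h3'⟩ := ih hm1 (by omega)
        have ham : a m ∈ op g (a' m) := h3' m hm1 le_rfl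
        have hnext : a (m + 1) ∈ op (a m) (b (m + 1)) := hchain m hm1 (by omega)
        have hmem : a (m + 1) ∈ setR op (op g (a' m)) (b (m + 1)) := by
          simp only [setR, Set.mem_iUnion]
          exact ⟨a m, ham, hnext⟩
        have h := hP g (a' m) (b (m + 1)) hmem
        simp only [setL, Set.mem_iUnion] at h
        obtain ⟨y, hy, hay⟩ := h
        refine ⟨Function.update a' (m + 1) y, ?_, ?_, ?_⟩
        · rwa [Function.update_of_ne (by omega)]
        · intro i hi1 hi
          rcases Nat.lt_or_ge i m with hlt | hge
          · rw [Function.update_of_ne (by omega), Function.update_of_ne (by omega)]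
            exact h2' i hi1 hlt
          · have : i = m := by omega
            subst this
            rw [Function.update_self, Function.update_of_ne (by omega)]
            exact hy
        · intro i hi1 hi
          rcases Nat.lt_or_ge i (m + 1) with hlt | hge
          · rw [Function.update_of_ne (by omega)]
            exact h3' i hi1 (by omega)
          · have : i = m + 1 := by omega
            subst this
            rw [Function.update_self]
            exact hay
  exact key n hn le_rfl
end

section
/- Let K be a set and · : K×K → 𝒫(K) satisfy (p) (x·y)·z ⊆ x·(y·z) and (s) (x·y)·z ⊆ y·(x·z) for all x,y,z ∈ K. Let k ≥ 1 and suppose there are elements d₀, …, d_k, h₁, …, h_k, x₁, …, x_k, y₁, …, y_k ∈ K with hᵢ ∈ dᵢ₋₁·xᵢ and dᵢ ∈ hᵢ·yᵢ for all 1 ≤ i ≤ k. Then there exist elements g_{i,j} ∈ K for all 0 ≤ i ≤ j ≤ k such that g_{i,i} = dᵢ for all 0 ≤ i ≤ k, g_{i+1,j} ∈ x_{i+1}·g_{i,j} whenever 0 ≤ i < i+1 ≤ j ≤ k, and g_{i,j+1} ∈ g_{i,j}·y_{j+1} whenever 0 ≤ i ≤ j < k. -/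
lemma mem_setL_iff {K : Type*} (op : K → K → Set K) (x : K) (Y : Set K) (z : K) :
    z ∈ setL op x Y ↔ ∃ w ∈ Y, z ∈ op x w := by simp [setL]

lemma mem_setR_iff {K : Type*} (op : K → K → Set K) (X : Set K) (y z : K) :
    z ∈ setR op X y ↔ ∃ w ∈ X, z ∈ op w y := by simp [setR]

/-- from a lower staircase `hᵢ ∈ dᵢ₋₁·xᵢ`, `dᵢ ∈ hᵢ·yᵢ` (1 ≤ i ≤ k),
the conditions (p) and (s) produce a full octant of points `g_{i,j}` (0 ≤ i ≤ j ≤ k)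
with `g_{i,i} = dᵢ`, `g_{i+1,j} ∈ x_{i+1}·g_{i,j}` and `g_{i,j+1} ∈ g_{i,j}·y_{j+1}`. -/
theorem octant_construction {K : Type*} (op : K → K → Set K)
    (hP : ∀ x y z : K, setR op (op x y) z ⊆ setL op x (op y z))
    (hS : ∀ x y z : K, setR op (op x y) z ⊆ setL op y (op x z))
    (k : ℕ) (hk : 1 ≤ k) (d h x y : ℕ → K)
    (hstair : ∀ i, i < k → h (i + 1) ∈ op (d i) (x (i + 1)) ∧
      d (i + 1) ∈ op (h (i + 1)) (y (i + 1))) :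
    ∃ g : ℕ → ℕ → K,
      (∀ i, i ≤ k → g i i = d i) ∧
      (∀ i j, i + 1 ≤ j → j ≤ k → g (i + 1) j ∈ op (x (i + 1)) (g i j)) ∧
      (∀ i j, i ≤ j → j < k → g i (j + 1) ∈ op (g i j) (y (j + 1))) := by
  suffices H : ∀ n, n ≤ k → ∃ g : ℕ → ℕ → K,
      (∀ i, i ≤ n → g i i = d i) ∧
      (∀ i j, i + 1 ≤ j → j ≤ n → g (i + 1) j ∈ op (x (i + 1)) (g i j)) ∧
      (∀ i j, i ≤ j → j + 1 ≤ n → g i (j + 1) ∈ op (g i j) (y (j + 1))) by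
    obtain ⟨g, h1, h2, h3⟩ := H k le_rfl
    exact ⟨g, h1, h2, fun i j hij hjk => h3 i j hij hjk⟩
  intro n
  induction n with
  | zero =>
    intro _
    refine ⟨fun _ _ => d 0, fun i hi => ?_, fun i j h1 h2 => by omega,
      fun i j h1 h2 => by omega⟩
    interval_cases i
    rfl
  | succ n ih =>
    intro hn
    obtain ⟨g, hdiag, hvert, hhor⟩ := ih (Nat.le_of_succ_le hn)
    have hnk : n < k := hn
    -- build the new column `c` at `j = n+1` by downward recursion
    have col : ∀ m : ℕ, ∃ c : ℕ → K, c (n + 1) = d (n + 1) ∧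
        (∀ i, i ≤ n → n + 1 ≤ i + m → c i ∈ op (g i n) (y (n + 1))) ∧
        (∀ i, i < n + 1 → n + 1 ≤ i + m → c (i + 1) ∈ op (x (i + 1)) (c i)) := by
      intro m
      induction m with
      | zero =>
        exact ⟨fun _ => d (n + 1), rfl, fun i hi hle => by omega, fun i hi hle => by omega⟩
      | succ m ihm =>
        obtain ⟨c, hc1, hc2, hc3⟩ := ihm
        by_cases hm : n + 1 ≤ m
        · exact ⟨c, hc1, fun i hi hle => hc2 i hi (by omega),
            fun i hi hle => hc3 i hi (by omega)⟩
        · -- new index i₀ = n - m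
          set i₀ := n - m with hi₀
          have hi₀m : i₀ + m = n := by omega
          -- find the element `e` for position `(i₀, n+1)`
          have key : ∃ e, e ∈ op (g i₀ n) (y (n + 1)) ∧ c (i₀ + 1) ∈ op (x (i₀ + 1)) e := by
            rcases Nat.eq_zero_or_pos m with hm0 | hm0
            · -- first step: use (s) and the staircase
              have hi₀n : i₀ = n := by omega
              rw [hi₀n]
              obtain ⟨hst1, hst2⟩ := hstair n hnk
              have hmem : d (n + 1) ∈ setR op (op (d n) (x (n + 1))) (y (n + 1)) := by
                rw [mem_setR_iff]
                exact ⟨h (n + 1), hst1, hst2⟩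
              have := hS _ _ _ hmem
              rw [mem_setL_iff] at this
              obtain ⟨e, he1, he2⟩ := this
              exact ⟨e, by rw [hdiag n le_rfl]; exact he1, by rw [hc1]; exact he2⟩
            · -- later steps: use (p)
              have h1 : i₀ + 1 ≤ n := by omega
              have hcmem : c (i₀ + 1) ∈ op (g (i₀ + 1) n) (y (n + 1)) :=
                hc2 (i₀ + 1) h1 (by omega)
              have hg : g (i₀ + 1) n ∈ op (x (i₀ + 1)) (g i₀ n) :=
                hvert i₀ n h1 le_rfl
              have hmem : c (i₀ + 1) ∈ setR op (op (x (i₀ + 1)) (g i₀ n)) (y (n + 1)) := by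
                rw [mem_setR_iff]
                exact ⟨g (i₀ + 1) n, hg, hcmem⟩
              have := hP _ _ _ hmem
              rw [mem_setL_iff] at this
              obtain ⟨e, he1, he2⟩ := this
              exact ⟨e, he1, he2⟩
          obtain ⟨e, he1, he2⟩ := key
          refine ⟨Function.update c i₀ e, ?_, ?_, ?_⟩
          · rw [Function.update_of_ne (by omega)]; exact hc1
          · intro i hi hle
            by_cases hii : i = i₀
            · subst hii; rw [Function.update_self]; exact he1
            · rw [Function.update_of_ne hii]; exact hc2 i hi (by omega)
          · intro i hi hle
            by_cases hii : i = i₀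
            · subst hii
              rw [Function.update_self,
                Function.update_of_ne (show i₀ + 1 ≠ i₀ by omega)]
              exact he2
            · rw [Function.update_of_ne (show i + 1 ≠ i₀ by omega),
                Function.update_of_ne hii]
              exact hc3 i hi (by omega)
    obtain ⟨c, hc1, hc2, hc3⟩ := col (n + 1)
    refine ⟨fun i j => if j = n + 1 then c i else g i j, ?_, ?_, ?_⟩
    · intro i hi
      by_cases hii : i = n + 1
      · subst hii; simp [hc1]
      · simp only [if_neg hii]; exact hdiag i (by omega)
    · intro i j hij hjk
      by_cases hjj : j = n + 1
      · subst hjj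
        simp only [if_pos rfl]
        exact hc3 i (by omega) (by omega)
      · simp only [if_neg hjj]
        exact hvert i j hij (by omega)
    · intro i j hij hjk
      by_cases hjj : j + 1 = n + 1
      · have hjn : j = n := by omega
        simp only [if_pos hjj, if_neg (show ¬ j = n + 1 by omega)]
        rw [hjn]
        exact hc2 i (by omega) (by omega)
      · simp only [if_neg hjj, if_neg (show ¬ j = n + 1 by omega)]
        exact hhor i j hij (by omega)
end

section
/- Define the two-element structure K = {n, a} with N = {n} and · : K×K → 𝒫(K) given by n·n = {n}, n·a = {a}, a·n = ∅, a·a = ∅. Then (K,·,N) is a Routley–Meyer frame (it satisfies reflexivity, transitivity, upset and down-down-up), it satisfies (h) x·y ⊆ x·(x·y), (p) (x·y)·z ⊆ x·(y·z) and (s) (x·y)·z ⊆ y·(x·z) for all x,y,z ∈ K, but it does not satisfy x ∈ x·x for all x ∈ K (indeed a ∉ a·a). -/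
/-- The two-element structure `K = {n, a}`, realized on `Bool` with `n = false` and
`a = true`: `n·n = {n}`, `n·a = {a}`, `a·n = ∅`, `a·a = ∅`. -/
def op2 : Bool → Bool → Set Bool
  | false, false => {false}
  | false, true => {true}
  | true, _ => ∅

lemma mem_op2 {x a b : Bool} : x ∈ op2 a b ↔ a = false ∧ x = b := by
  cases a <;> cases b <;> simp [op2]

lemma RMle_iff {x y : Bool} : RMle op2 {false} x y ↔ y = x := by
  simp [RMle, mem_op2]

/-- `({n,a}, ·, {n})` is a Routley–Meyer frame satisfying (h), (p) and (s),
but not `x ∈ x·x` for all `x`; indeed `a ∉ a·a`. -/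
theorem two_element_counterexample :
    IsRM op2 {false} ∧
    (∀ x y : Bool, op2 x y ⊆ setL op2 x (op2 x y)) ∧
    (∀ x y z : Bool, setR op2 (op2 x y) z ⊆ setL op2 x (op2 y z)) ∧
    (∀ x y z : Bool, setR op2 (op2 x y) z ⊆ setL op2 y (op2 x z)) ∧
    ¬ (∀ x : Bool, x ∈ op2 x x) ∧
    true ∉ op2 true true := by
  refine ⟨⟨?_, ?_, ?_, ?_⟩, ?_, ?_, ?_, ?_, ?_⟩
  · intro x; simp [RMle_iff]
  · intro x y z h1 h2; simp_all [RMle_iff]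
  · intro n m hn h; simp_all [RMle_iff]
  · intro x y z x' y' z' hz h1 h2 h3
    rw [RMle_iff] at h1 h2 h3
    subst h1; subst h2; subst h3; exact hz
  · intro x y u hu
    simp [mem_op2] at hu
    simp [setL, mem_op2]
    tauto
  · intro x y z u hu
    simp [setR, mem_op2] at hu
    simp [setL, mem_op2]
    tauto
  · intro x y z u hu
    simp [setR, mem_op2] at hu
    simp [setL, mem_op2]
    tauto
  · intro h; have := h true; simp [op2] at this
  · simp [op2]
end

section
/- Let (𝒫_fin(ℕ), ∪) be the finite subsets of ℕ under union, and let (ℕ², ·) be the structure where (m'',n'') ∈ (m,n)·(m',n') iff max{m,m'} ≤ m'' ≤ m+m' and max{n,n'} ≤ n'' ≤ n+n'. Then the map f : 𝒫_fin(ℕ) → ℕ² given by f(X) := (|X ∩ 2ℕ|, |X ∩ (2ℕ+1)|), where 2ℕ is the set of even and 2ℕ+1 the set of odd natural numbers, is a p-morphism from (𝒫_fin(ℕ), ∪) to (ℕ², ·), where the operation on 𝒫_fin(ℕ) is X·Y := {X ∪ Y}. -/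
/-- A p-morphism between structures `(K, ·)` and `(K', ·')`. -/
def IsPMorphism {K K' : Type*} (op : K → K → Set K) (op' : K' → K' → Set K')
    (f : K → K') : Prop :=
  (∀ x y z : K, z ∈ op x y → f z ∈ op' (f x) (f y)) ∧
  (∀ (x : K) (y' z' : K'), z' ∈ op' (f x) y' →
    ∃ y z : K, f y = y' ∧ f z = z' ∧ z ∈ op x y)

/-- The operation on `ℕ²`: `(m'',n'') ∈ (m,n)·(m',n')` iff
`max m m' ≤ m'' ≤ m + m'` and `max n n' ≤ n'' ≤ n + n'`. -/
def opN2 (p q : ℕ × ℕ) : Set (ℕ × ℕ) :=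
  {r | max p.1 q.1 ≤ r.1 ∧ r.1 ≤ p.1 + q.1 ∧ max p.2 q.2 ≤ r.2 ∧ r.2 ≤ p.2 + q.2}

/-- `f(X) = (|X ∩ 2ℕ|, |X ∩ (2ℕ+1)|)`: the number of even and of odd elements of `X`. -/
def parityCount (X : Finset ℕ) : ℕ × ℕ :=
  ((X.filter fun n => Even n).card, (X.filter fun n => Odd n).card)

lemma freshAux (P : ℕ → Prop) [DecidablePred P] (h : {n : ℕ | P n}.Infinite)
    (x : Finset ℕ) (k : ℕ) :
    ∃ F : Finset ℕ, F.card = k ∧ ∀ n ∈ F, P n ∧ n ∉ x := by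
  obtain ⟨F, hF, hcard⟩ := (h.diff x.finite_toSet).exists_subset_card_eq k
  exact ⟨F, hcard, fun n hn => by have := hF hn; simpa using this⟩

lemma evenInf : {n : ℕ | Even n}.Infinite :=
  Set.infinite_of_injective_forall_mem (f := fun n : ℕ => 2 * n)
    (fun a b h => by simp only at h; omega) (fun a => ⟨a, (two_mul a)⟩)

lemma oddInf : {n : ℕ | Odd n}.Infinite :=
  Set.infinite_of_injective_forall_mem (f := fun n : ℕ => 2 * n + 1)
    (fun a b h => by simp only at h; omega) (fun a => ⟨a, rfl⟩)

/-- `parityCount` is a p-morphism from `(𝒫_fin(ℕ), ∪)` (with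
`X·Y = {X ∪ Y}`) to `(ℕ², ·)`. -/
theorem parityCount_pmorphism :
    IsPMorphism (fun X Y : Finset ℕ => ({X ∪ Y} : Set (Finset ℕ))) opN2 parityCount := by
  constructor
  · rintro x y z (rfl : z = x ∪ y)
    simp only [parityCount, opN2, Set.mem_setOf_eq, Finset.filter_union]
    exact ⟨max_le (Finset.card_le_card Finset.subset_union_left)
        (Finset.card_le_card Finset.subset_union_right),
      Finset.card_union_le _ _,
      max_le (Finset.card_le_card Finset.subset_union_left)
        (Finset.card_le_card Finset.subset_union_right),
      Finset.card_union_le _ _⟩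
  · rintro x ⟨m', n'⟩ ⟨m'', n''⟩ ⟨h1, h2, h3, h4⟩
    simp only [parityCount, max_le_iff] at h1 h2 h3 h4 ⊢
    set E := x.filter (fun n => Even n) with hE
    set O := x.filter (fun n => Odd n) with hO
    obtain ⟨A, hAE, hA⟩ := Finset.exists_subset_card_eq
      (show E.card + m' - m'' ≤ E.card by omega)
    obtain ⟨B, hBO, hB⟩ := Finset.exists_subset_card_eq
      (show O.card + n' - n'' ≤ O.card by omega)
    obtain ⟨F, hF, hFm⟩ := freshAux (fun n => Even n) evenInf x (m'' - E.card)
    obtain ⟨G, hG, hGm⟩ := freshAux (fun n => Odd n) oddInf x (n'' - O.card)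
    refine ⟨A ∪ F ∪ (B ∪ G), x ∪ (A ∪ F ∪ (B ∪ G)), ?_, ?_, rfl⟩
    all_goals {
    have hAeven : ∀ n ∈ A, Even n := fun n hn => (Finset.mem_filter.1 (hAE hn)).2
    have hBodd : ∀ n ∈ B, Odd n := fun n hn => (Finset.mem_filter.1 (hBO hn)).2
    have hAx : A ⊆ x := hAE.trans (Finset.filter_subset _ _)
    have hdisjFx : Disjoint F x := Finset.disjoint_left.2 fun n hn => (hFm n hn).2
    have hdisjGx : Disjoint G x := Finset.disjoint_left.2 fun n hn => (hGm n hn).2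
    have hfe : ∀ (S : Finset ℕ), (∀ n ∈ S, Even n) → S.filter (fun n => Even n) = S ∧
        S.filter (fun n => Odd n) = ∅ := by
      intro S hS
      refine ⟨Finset.filter_eq_self.2 hS, Finset.filter_eq_empty_iff.2 fun n hn => ?_⟩
      have := hS n hn
      simp only [Nat.odd_iff, Nat.even_iff] at *
      omega
    have hfo : ∀ (S : Finset ℕ), (∀ n ∈ S, Odd n) → S.filter (fun n => Odd n) = S ∧
        S.filter (fun n => Even n) = ∅ := by
      intro S hS
      refine ⟨Finset.filter_eq_self.2 hS, Finset.filter_eq_empty_iff.2 fun n hn => ?_⟩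
      have := hS n hn
      simp only [Nat.odd_iff, Nat.even_iff] at *
      omega
    have e1 : (A ∪ F ∪ (B ∪ G)).filter (fun n => Even n) = A ∪ F := by
      simp only [Finset.filter_union, (hfe A hAeven).1, (hfe F (fun n hn => (hFm n hn).1)).1,
        (hfo B hBodd).2, (hfo G (fun n hn => (hGm n hn).1)).2]
      simp
    have e2 : (A ∪ F ∪ (B ∪ G)).filter (fun n => Odd n) = B ∪ G := by
      simp only [Finset.filter_union, (hfe A hAeven).2, (hfe F (fun n hn => (hFm n hn).1)).2,
        (hfo B hBodd).1, (hfo G (fun n hn => (hGm n hn).1)).1]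
      simp
    have e3 : (x ∪ (A ∪ F ∪ (B ∪ G))).filter (fun n => Even n) = E ∪ F := by
      rw [Finset.filter_union, e1, ← Finset.union_assoc, ← hE,
        Finset.union_eq_left.2 hAE]
    have e4 : (x ∪ (A ∪ F ∪ (B ∪ G))).filter (fun n => Odd n) = O ∪ G := by
      rw [Finset.filter_union, e2, ← Finset.union_assoc, ← hO,
        Finset.union_eq_left.2 hBO]
    have cAF : (A ∪ F).card = m' := by
      rw [Finset.card_union_of_disjoint
        ((hdisjFx.mono_right hAx).symm), hA, hF]
      omega
    have cBG : (B ∪ G).card = n' := by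
      rw [Finset.card_union_of_disjoint
        ((hdisjGx.mono_right (hBO.trans (Finset.filter_subset _ _))).symm), hB, hG]
      omega
    have cEF : (E ∪ F).card = m'' := by
      rw [Finset.card_union_of_disjoint
        ((hdisjFx.mono_right (Finset.filter_subset _ _)).symm), hF, ← hE]
      omega
    have cOG : (O ∪ G).card = n'' := by
      rw [Finset.card_union_of_disjoint
        ((hdisjGx.mono_right (Finset.filter_subset _ _)).symm), hG, ← hO]
      omega
    first
    | (rw [e1, e2, cAF, cBG])
    | (rw [e3, e4, cEF, cOG]) }
end
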